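/- Let λ be an uncountable cardinal and suppose ⟨(C_α, S_α) : α < λ⁺⟩ is a ⊠^Γ_λ-sequence for some Γ ⊆ λ⁺ such that Γ \ θ ≠ ∅ for all θ < λ. Then the very same sequence witnesses ⊠^{Reg(λ)}_λ: for every club D ⊆ λ⁺, every cofinal A ⊆ λ⁺, and every regular θ < λ, there exists β < λ⁺ with cf(β) = θ, C_β ⊆ D, S_β = A ∩ β, and sup(acc(C_β)) = β. -/

import Mathlib

open Ordinal Set

noncomputable section

/-- The set of accumulation points of `C` that belong to `C`. -/
def acc (C : Set Ordinal) : Set Ordinal :=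
  {β | β ∈ C ∧ ∀ γ < β, ∃ δ ∈ C, γ < δ ∧ δ < β}

/-- Non-accumulation points of `C`. -/
def nacc (C : Set Ordinal) : Set Ordinal := C \ acc C

/-- `X ∩ α` is cofinal in `α`. -/
def CofinalIn (X : Set Ordinal) (α : Ordinal) : Prop :=
  ∀ γ < α, ∃ δ ∈ X, γ < δ ∧ δ < α

/-- Accumulation points of `C` (not necessarily members of `C`). -/
def accPlus (C : Set Ordinal) : Set Ordinal :=
  {β | (∃ δ ∈ C, δ < β) ∧ ∀ γ < β, ∃ δ ∈ C, γ < δ ∧ δ < β}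

def IsClosedSet (C : Set Ordinal) : Prop := accPlus C ⊆ C

/-- `C` is a club (closed and unbounded) subset of `α`. -/
def IsClubIn (C : Set Ordinal) (α : Ordinal) : Prop :=
  C ⊆ Set.Iio α ∧ CofinalIn C α ∧ ∀ β < α, β ∈ accPlus C → β ∈ C

/-- The `i`-th element of the set of ordinals `C` (the inverse collapse of `C`). -/
def nth (C : Set Ordinal) (i : Ordinal) : Ordinal :=
  sInf (C \ Set.range (fun j : Set.Iio i => nth C j.1))
termination_by i
decreasing_by exact j.2

/-- The order type of a set of ordinals: the least `i` such that the first `i`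
elements of `C` exhaust `C`. -/
def otp (C : Set Ordinal) : Ordinal :=
  sInf {i | C ⊆ Set.range (fun j : Set.Iio i => nth C j.1)}

/-- The image of `E` under the order isomorphism (inverse collapse) `π_C : otp(C) → C`. -/
def collapseImage (C E : Set Ordinal) : Set Ordinal :=
  {β | β ∈ C ∧ otp (C ∩ Set.Iio β) ∈ E}

def IsStationaryIn (S : Set Ordinal) (α : Ordinal) : Prop :=
  ∀ D, IsClubIn D α → (S ∩ D).Nonempty

/-- A `□_λ`-sequence. -/
def IsSquareSeq (lam : Cardinal) (C : Ordinal → Set Ordinal) : Prop :=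
  ∀ α < (Order.succ lam).ord, Order.IsSuccLimit α →
    IsClubIn (C α) α ∧ otp (C α) ≤ lam.ord ∧
    ∀ β ∈ acc (C α), C β = C α ∩ Set.Iio β

/-- An Ostaszewski square (`⊠_λ`) sequence. -/
def IsOstSeq (lam : Cardinal) (C : Ordinal → Set Ordinal) : Prop :=
  IsSquareSeq lam C ∧
  ∀ A : Ordinal → Set Ordinal,
    (∀ i < lam.ord, CofinalIn (A i) (Order.succ lam).ord) →
    ∀ θ < lam.ord, Order.IsSuccLimit θ →
    ∀ D, IsClubIn D (Order.succ lam).ord →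
    ∃ α < (Order.succ lam).ord, otp (C α) = θ ∧
      ∀ i < θ, nth (C α) (i + 1) ∈ A i ∧
        ∃ β ∈ D, nth (C α) i < β ∧ β < nth (C α) (i + 1)

section AuxLemmas

/-- Cofinality of a blsub of a strictly monotone sequence of length `θ.ord`
for regular `θ` equals `θ`. -/
theorem cof_blsub_strictMono {θ : Cardinal} (hθ : θ.IsRegular)
    {f : Ordinal → Ordinal}
    (hmono : ∀ i j : Ordinal, i < j → j < θ.ord → f i < f j) :
    (Ordinal.blsub θ.ord (fun j _ => f j)).cof = θ := by
  have hθlim : Order.IsSuccLimit θ.ord := Cardinal.isSuccLimit_ord hθ.aleph0_le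
  set β := Ordinal.blsub θ.ord (fun j _ => f j) with hβ
  apply le_antisymm
  · calc β.cof ≤ θ.ord.card := Ordinal.cof_blsub_le _
      _ = θ := Cardinal.card_ord θ
  · obtain ⟨ι, g, hg, hι⟩ := Ordinal.exists_lsub_cof β
    have hT : ∀ i : ι, ∃ j, j < θ.ord ∧ g i < f j := by
      intro i
      have hgi : g i < β := by rw [← hg]; exact Ordinal.lt_lsub g i
      rw [hβ, Ordinal.lt_blsub_iff] at hgi
      obtain ⟨j, hj, hle⟩ := hgi
      exact ⟨Order.succ j, hθlim.succ_lt hj,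
        hle.trans_lt (hmono j (Order.succ j) (Order.lt_succ j) (hθlim.succ_lt hj))⟩
    set h : ι → Ordinal := fun i => sInf {j | j < θ.ord ∧ g i < f j} with hh
    have hmem : ∀ i : ι, h i < θ.ord ∧ g i < f (h i) := fun i =>
      csInf_mem (s := {j | j < θ.ord ∧ g i < f j}) (by
        obtain ⟨j, hj1, hj2⟩ := hT i; exact ⟨j, hj1, hj2⟩)
    have hlsub : Ordinal.lsub h = θ.ord := by
      apply le_antisymm
      · exact Ordinal.lsub_le fun i => (hmem i).1
      · apply le_of_forall_lt
        intro a ha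
        have hfa : f a < β := Ordinal.lt_blsub (fun j _ => f j) a ha
        rw [← hg, Ordinal.lt_lsub_iff] at hfa
        obtain ⟨i, hi⟩ := hfa
        rw [Ordinal.lt_lsub_iff]
        refine ⟨i, ?_⟩
        by_contra hcon
        push_neg at hcon
        exact absurd (hi.trans_lt (hmem i).2)
          (not_lt.2 (hmono _ _ hcon ha).le)
    calc θ = θ.ord.cof := hθ.cof_eq.symm
      _ = (Ordinal.lsub h).cof := by rw [hlsub]
      _ ≤ Cardinal.mk ι := Ordinal.cof_lsub_le h
      _ = β.cof := hι

end AuxLemmas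

theorem stmt14 (lam : Cardinal) (hunc : Cardinal.aleph0 < lam)
    (Γ : Set Ordinal) (hΓsub : Γ ⊆ Set.Iio (Order.succ lam).ord)
    (hΓ : ∀ θ < lam.ord, ∃ ξ ∈ Γ, θ ≤ ξ ∧ ξ ≠ 0 ∧ Order.IsSuccLimit ξ)
    (C S : Ordinal → Set Ordinal) (hsq : IsSquareSeq lam C)
    (hcoh : ∀ α < (Order.succ lam).ord, Order.IsSuccLimit α → ∀ β ∈ acc (C α),
      S β = S α ∩ Set.Iio β)
    (hguess : ∀ D, IsClubIn D (Order.succ lam).ord → ∀ A : Set Ordinal,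
      ∀ θ ∈ Γ, θ ≠ 0 → Order.IsSuccLimit θ →
        ∃ α < (Order.succ lam).ord, C α ⊆ D ∧ S α = A ∩ Set.Iio α ∧
          (α.cof).ord = θ ∧ CofinalIn (acc (C α)) α) :
    ∀ D, IsClubIn D (Order.succ lam).ord →
      ∀ A : Set Ordinal, CofinalIn A (Order.succ lam).ord →
        ∀ θ : Cardinal, θ.IsRegular → θ < lam →
          ∃ β < (Order.succ lam).ord, β.cof = θ ∧ C β ⊆ D ∧
            S β = A ∩ Set.Iio β ∧ CofinalIn (acc (C β)) β := by
  intro D hD A hA θ hθreg hθlam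
  obtain ⟨ξ, hξΓ, hθξ, hξ0, hξlim⟩ := hΓ θ.ord (Cardinal.ord_lt_ord.2 hθlam)
  obtain ⟨α, hαlt, hCD, hSA, hcofα, haccα⟩ := hguess D hD A ξ hξΓ hξ0 hξlim
  have hαlim : Order.IsSuccLimit α := by
    rw [← Ordinal.aleph0_le_cof, ← Cardinal.ord_le_ord, Cardinal.ord_aleph0, hcofα]
    exact Ordinal.omega0_le_of_isSuccLimit hξlim
  obtain ⟨hclub, -, hc⟩ := hsq α hαlt hαlim
  rcases eq_or_lt_of_le hθξ with heq | hlt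
  · exact ⟨α, hαlt, Cardinal.ord_injective (hcofα.trans heq.symm), hCD, hSA, haccα⟩
  · have hθcofα : θ < α.cof := by
      rw [← Cardinal.ord_lt_ord, hcofα]; exact hlt
    set E : Set Ordinal := acc (C α) with hE
    have hEsub : E ⊆ C α := fun x hx => hx.1
    set E' : Set Ordinal := E ∪ Set.Ici α with hE'
    have hE'unb : ¬ BddAbove E' := by
      rintro ⟨b, hb⟩
      have h1 : b + 1 ≤ b := le_trans (le_max_left (b + 1) α) (hb (show max (b + 1) α ∈ E' from Or.inr (show α ≤ max (b + 1) α from le_max_right _ _)))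
      have h2 : b < b + 1 := by rw [Ordinal.add_one_eq_succ]; exact Order.lt_succ b
      exact absurd h1 (not_le.2 h2)
    set f : Ordinal → Ordinal := Ordinal.enumOrd E' with hf
    have hfmem : ∀ i, f i ∈ E' := fun i => Ordinal.enumOrd_mem hE'unb i
    have hfmono : StrictMono f := Ordinal.enumOrd_strictMono hE'unb
    have hkey : ∀ i, i < θ.ord → f i < α := by
      intro i
      induction i using Ordinal.induction with
      | _ i IH =>
        intro hiθ
        have hs : Ordinal.blsub i (fun j _ => f j) < α := by
          apply Ordinal.blsub_lt_ord
          · exact (Cardinal.lt_ord.1 hiθ).trans hθcofα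
          · intro j hj; exact IH j hj (hj.trans hiθ)
        obtain ⟨δ, hδE, hδ1, hδ2⟩ := haccα _ hs
        have hle : f i ≤ δ := by
          apply Ordinal.enumOrd_le_of_forall_lt (Or.inl hδE)
          intro b hb
          exact lt_trans (Ordinal.lt_blsub (fun j _ => f j) b hb) hδ1
        exact hle.trans_lt hδ2
    set β := Ordinal.blsub θ.ord (fun j _ => f j) with hβdef
    have hθordlim : Order.IsSuccLimit θ.ord := Cardinal.isSuccLimit_ord hθreg.aleph0_le
    have hβα : β < α :=
      Ordinal.blsub_lt_ord (by rw [Cardinal.card_ord]; exact hθcofα) fun j hj => hkey j hj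
    have hfE : ∀ j, j < θ.ord → f j ∈ E := by
      intro j hj
      rcases hfmem j with h | h
      · exact h
      · exact absurd (hkey j hj) (not_lt.2 h)
    have hfβ : ∀ j, j < θ.ord → f j < β := fun j hj => Ordinal.lt_blsub _ j hj
    have hβaccE : ∀ γ < β, ∃ δ ∈ E, γ < δ ∧ δ < β := by
      intro γ hγ
      rw [hβdef, Ordinal.lt_blsub_iff] at hγ
      obtain ⟨j, hj, hle⟩ := hγ
      have hj1 : Order.succ j < θ.ord := hθordlim.succ_lt hj
      exact ⟨f (Order.succ j), hfE _ hj1, hle.trans_lt (hfmono (Order.lt_succ j)), hfβ _ hj1⟩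
    have hβCα : β ∈ C α := by
      apply hclub.2.2 β hβα
      refine ⟨⟨f 0, hEsub (hfE 0 hθordlim.pos), hfβ 0 hθordlim.pos⟩, ?_⟩
      intro γ hγ
      obtain ⟨δ, hδE, h1, h2⟩ := hβaccE γ hγ
      exact ⟨δ, hEsub hδE, h1, h2⟩
    have hβE : β ∈ E := by
      refine ⟨hβCα, ?_⟩
      intro γ hγ
      obtain ⟨δ, hδE, h1, h2⟩ := hβaccE γ hγ
      exact ⟨δ, hEsub hδE, h1, h2⟩
    have hCβ : C β = C α ∩ Set.Iio β := hc β hβE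
    have hcofβ : β.cof = θ :=
      cof_blsub_strictMono hθreg fun i j hij _ => hfmono hij
    refine ⟨β, hβα.trans hαlt, hcofβ, ?_, ?_, ?_⟩
    · rw [hCβ]; exact fun x hx => hCD hx.1
    · rw [hcoh α hαlt hαlim β hβE, hSA]
      ext x
      simp only [Set.mem_inter_iff, Set.mem_Iio]
      constructor
      · rintro ⟨⟨hxA, -⟩, hxβ⟩; exact ⟨hxA, hxβ⟩
      · rintro ⟨hxA, hxβ⟩; exact ⟨⟨hxA, hxβ.trans hβα⟩, hxβ⟩
    · intro γ hγ
      obtain ⟨δ, hδE, h1, h2⟩ := hβaccE γ hγ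
      refine ⟨δ, ⟨?_, ?_⟩, h1, h2⟩
      · rw [hCβ]; exact ⟨hEsub hδE, h2⟩
      · intro γ' hγ'
        obtain ⟨δ', hδ', h1', h2'⟩ := hδE.2 γ' hγ'
        refine ⟨δ', ?_, h1', h2'⟩
        rw [hCβ]; exact ⟨hδ', h2'.trans h2⟩


end
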